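/- The Fenwick ranges along the sum sequence of i partition the interval [1, i]: if s 0 = i, s (j+1) = s j - 2^(rmb (s j)), and r = popcount i, then the half-open intervals (s (j+1), s j] for j = 0, ..., r-1 are pairwise disjoint and their union is the set {1, 2, ..., i}. -/

import Mathlib

/-- Position of the least significant set bit of a positive natural. -/
def rmb (i : ℕ) : ℕ := padicValNat 2 i

/-- Number of 1-bits in the binary representation. -/
def popcount (i : ℕ) : ℕ := (Nat.bits i).count true

/-- One step of the sum sequence: clear the lowest set bit. -/
def sumStep (x : ℕ) : ℕ := x - 2 ^ rmb x

/-- The sum sequence of `i`. -/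
def sumSeq (i j : ℕ) : ℕ := sumStep^[j] i

/-- One step of the update sequence. -/
def updStep (x : ℕ) : ℕ := x + 2 ^ rmb x

/-- The update sequence of `i`. -/
def updSeq (i j : ℕ) : ℕ := updStep^[j] i

/-- The Fenwick array of `A`: entry `k` sums `A` over `(k - 2^(rmb k), k]`. -/
def fenwick (A : ℕ → ℤ) (k : ℕ) : ℤ := ∑ m ∈ Finset.Ioc (k - 2 ^ rmb k) k, A m

lemma popcount_two_mul (k : ℕ) : popcount (2 * k) = popcount k := by
  rcases Nat.eq_zero_or_pos k with h | h
  · simp [h]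
  · unfold popcount
    rw [Nat.bit0_bits k h.ne']
    simp

lemma popcount_two_mul_add_one (k : ℕ) : popcount (2 * k + 1) = popcount k + 1 := by
  unfold popcount
  rw [Nat.bit1_bits k]
  simp

lemma sumStep_lt (x : ℕ) (hx : 0 < x) : sumStep x < x := by
  have : (0:ℕ) < 2 ^ rmb x := Nat.pow_pos (by norm_num)
  have h2 : 2 ^ rmb x ≤ x := Nat.le_of_dvd hx (pow_padicValNat_dvd)
  unfold sumStep
  omega

lemma popcount_sumStep (x : ℕ) (hx : 0 < x) : popcount (sumStep x) + 1 = popcount x := by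
  induction x using Nat.strong_induction_on with
  | _ x ih =>
    rcases Nat.even_or_odd x with ⟨k, hk⟩ | ⟨k, hk⟩
    · have hk2 : x = 2 * k := by omega
      have hkpos : 0 < k := by omega
      have hrmb : rmb (2 * k) = rmb k + 1 := by
        unfold rmb
        have : padicValNat 2 (2 * k) = padicValNat 2 2 + padicValNat 2 k :=
          padicValNat.mul (by norm_num) hkpos.ne'
        simp [this, padicValNat.self]
        omega
      have hstep : sumStep (2 * k) = 2 * sumStep k := by
        unfold sumStep
        rw [hrmb, pow_succ]
        have h2 : 2 ^ rmb k ≤ k := Nat.le_of_dvd hkpos (pow_padicValNat_dvd)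
        omega
      rw [hk2, hstep, popcount_two_mul, popcount_two_mul, ih k (by omega) hkpos]
    · have hrmb : rmb x = 0 := by
        unfold rmb
        apply padicValNat.eq_zero_of_not_dvd
        omega
      have hstep : sumStep x = 2 * k := by unfold sumStep; rw [hrmb]; omega
      rw [hstep, popcount_two_mul, hk, popcount_two_mul_add_one]

lemma sumSeq_popcount (x : ℕ) : sumSeq x (popcount x) = 0 := by
  induction x using Nat.strong_induction_on with
  | _ x ih =>
    rcases Nat.eq_zero_or_pos x with h | h
    · simp [h, sumSeq, popcount]
    · have hpc := popcount_sumStep x h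
      have hlt := sumStep_lt x h
      have : sumSeq x (popcount x) = sumSeq (sumStep x) (popcount (sumStep x)) := by
        unfold sumSeq
        rw [← hpc, Function.iterate_succ_apply]
      rw [this]
      exact ih _ (by omega)

lemma sumSeq_succ (i j : ℕ) : sumSeq i (j + 1) = sumStep (sumSeq i j) := by
  unfold sumSeq; rw [Function.iterate_succ_apply']

lemma sumSeq_le_succ (i j : ℕ) : sumSeq i (j + 1) ≤ sumSeq i j := by
  rw [sumSeq_succ]; exact Nat.sub_le _ _

lemma sumSeq_antitone (i : ℕ) : Antitone (sumSeq i) := by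
  apply antitone_nat_of_succ_le
  exact fun n => sumSeq_le_succ i n

theorem fenwick_ranges_partition (i : ℕ) (hi : 0 < i) :
    (∀ j₁ < popcount i, ∀ j₂ < popcount i, j₁ ≠ j₂ →
        Disjoint (Finset.Ioc (sumSeq i (j₁ + 1)) (sumSeq i j₁))
          (Finset.Ioc (sumSeq i (j₂ + 1)) (sumSeq i j₂))) ∧
      (Finset.range (popcount i)).biUnion
          (fun j => Finset.Ioc (sumSeq i (j + 1)) (sumSeq i j)) = Finset.Icc 1 i := by
  have hdis : ∀ j₁ j₂ : ℕ, j₁ < j₂ →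
      Disjoint (Finset.Ioc (sumSeq i (j₁ + 1)) (sumSeq i j₁))
        (Finset.Ioc (sumSeq i (j₂ + 1)) (sumSeq i j₂)) := by
    intro j₁ j₂ h
    rw [Finset.disjoint_left]
    intro a ha hb
    simp only [Finset.mem_Ioc] at ha hb
    have : sumSeq i j₂ ≤ sumSeq i (j₁ + 1) := sumSeq_antitone i (by omega)
    omega
  constructor
  · intro j₁ _ j₂ _ hne
    rcases Nat.lt_or_ge j₁ j₂ with h | h
    · exact hdis j₁ j₂ h
    · exact (hdis j₂ j₁ (by omega)).symm
  · have key : ∀ r : ℕ, (Finset.range r).biUnion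
        (fun j => Finset.Ioc (sumSeq i (j + 1)) (sumSeq i j)) = Finset.Ioc (sumSeq i r) i := by
      intro r
      induction r with
      | zero => simp [sumSeq]
      | succ n ihn =>
        rw [Finset.range_add_one, Finset.biUnion_insert, ihn]
        have h1 : sumSeq i (n + 1) ≤ sumSeq i n := sumSeq_le_succ i n
        have h2 : sumSeq i n ≤ i := by
          have := sumSeq_antitone i (Nat.zero_le n)
          simpa [sumSeq] using this
        rw [Finset.Ioc_union_Ioc_eq_Ioc h1 h2]
    rw [key, sumSeq_popcount]
    ext x
    simp [Nat.lt_iff_add_one_le]
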